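/- Let Φ be an M×N complex matrix whose columns all have unit ℓ2-norm, and suppose the coherence of Φ satisfies μ(Φ) = μ. Then for every K ≤ M with (K−1)·μ < 1, the matrix Φ has the (K, (K−1)μ)-restricted isometry property. -/

import Mathlib

open Finset

/-- The standard Hermitian inner product on `ℂ^M` (linear in the first argument). -/
noncomputable def herm {M : ℕ} (x y : Fin M → ℂ) : ℂ :=
  ∑ k, x k * (starRingEnd ℂ) (y k)

/-- `x` has at most `K` nonzero entries. -/
def SparseLe {N : ℕ} (K : ℕ) (x : Fin N → ℂ) : Prop :=
  ∃ s : Finset (Fin N), s.card ≤ K ∧ ∀ j ∉ s, x j = 0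

/-- The `(K, δ)`-restricted isometry property. -/
def RIP {M N : ℕ} (Φ : Matrix (Fin M) (Fin N) ℂ) (K : ℕ) (δ : ℝ) : Prop :=
  ∀ x : Fin N → ℂ, SparseLe K x →
    (1 - δ) * ∑ j, ‖x j‖ ^ 2 ≤ ∑ m, ‖∑ j, Φ m j * x j‖ ^ 2 ∧
      ∑ m, ‖∑ j, Φ m j * x j‖ ^ 2 ≤ (1 + δ) * ∑ j, ‖x j‖ ^ 2


theorem coherence_implies_rip (M N K : ℕ) (hMN : M ≤ N) (μ : ℝ)
    (Φ : Matrix (Fin M) (Fin N) ℂ)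
    (hunit : ∀ j : Fin N, ∑ i, ‖Φ i j‖ ^ 2 = 1)
    (hμ : IsGreatest
      ((fun jk : Fin N × Fin N =>
        ‖herm (fun m => Φ m jk.1) (fun m => Φ m jk.2)‖) ''
          {jk : Fin N × Fin N | jk.1 ≠ jk.2}) μ)
    (hKM : K ≤ M) (hKμ : ((K : ℝ) - 1) * μ < 1) :
    RIP Φ K (((K : ℝ) - 1) * μ) := by
  obtain ⟨hmem, hub⟩ := hμ
  have hμ0 : 0 ≤ μ := by
    obtain ⟨jk0, _, hval0⟩ := hmem
    rw [← hval0]; exact norm_nonneg _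
  intro x hx
  obtain ⟨s, hsK, hs0⟩ := hx
  set δ : ℝ := ((K : ℝ) - 1) * μ with hδ
  set a : Fin N → ℝ := fun j => ‖x j‖ with ha
  set S : ℝ := ∑ j, ‖x j‖ ^ 2 with hS
  set G : Fin N → Fin N → ℂ := fun j k => ∑ m, Φ m j * (starRingEnd ℂ) (Φ m k) with hG
  have hGdiag : ∀ j, G j j = 1 := by
    intro j
    have h1 : ∀ m : Fin M, Φ m j * (starRingEnd ℂ) (Φ m j)
        = ((‖Φ m j‖ ^ 2 : ℝ) : ℂ) := by
      intro m
      rw [Complex.mul_conj, Complex.sq_norm]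
    calc G j j = ∑ m, ((‖Φ m j‖ ^ 2 : ℝ) : ℂ) := by
            simp [hG, h1]
      _ = ((∑ m, ‖Φ m j‖ ^ 2 : ℝ) : ℂ) := by push_cast; ring
      _ = 1 := by rw [hunit j]; norm_num
  have hGbound : ∀ j k : Fin N, j ≠ k → ‖G j k‖ ≤ μ := by
    intro j k hjk
    exact hub ⟨(j, k), hjk, rfl⟩
  -- main expansion
  have key : ∑ m, ‖∑ j, Φ m j * x j‖ ^ 2
      = S + (∑ j, ∑ k ∈ Finset.univ.erase j,
          x j * (starRingEnd ℂ) (x k) * G j k).re := by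
    have h1 : ∑ m, ‖∑ j, Φ m j * x j‖ ^ 2
        = (∑ j, ∑ k, x j * (starRingEnd ℂ) (x k) * G j k).re := by
      have e1 : ∀ m : Fin M, (‖∑ j, Φ m j * x j‖ ^ 2 : ℝ)
          = ((∑ j, Φ m j * x j) * (starRingEnd ℂ) (∑ k, Φ m k * x k)).re := by
        intro m
        rw [Complex.mul_conj, Complex.sq_norm]
        simp
      rw [Finset.sum_congr rfl fun m _ => e1 m, ← Complex.re_sum]
      congr 1
      have e2 : ∀ m : Fin M, (∑ j, Φ m j * x j) * (starRingEnd ℂ) (∑ k, Φ m k * x k)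
          = ∑ j, ∑ k, (Φ m j * x j) * ((starRingEnd ℂ) (Φ m k) * (starRingEnd ℂ) (x k)) := by
        intro m
        rw [map_sum, Finset.sum_mul_sum]
        simp [map_mul]
      rw [Finset.sum_congr rfl fun m _ => e2 m]
      rw [Finset.sum_comm]
      refine Finset.sum_congr rfl fun j _ => ?_
      rw [Finset.sum_comm]
      refine Finset.sum_congr rfl fun k _ => ?_
      rw [hG, Finset.mul_sum]
      exact Finset.sum_congr rfl fun m _ => by ring
    rw [h1]
    have h2 : ∀ j : Fin N, ∑ k, x j * (starRingEnd ℂ) (x k) * G j k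
        = x j * (starRingEnd ℂ) (x j)
          + ∑ k ∈ Finset.univ.erase j, x j * (starRingEnd ℂ) (x k) * G j k := by
      intro j
      rw [← Finset.add_sum_erase _ _ (Finset.mem_univ j), hGdiag j, mul_one]
    rw [Finset.sum_congr rfl fun j _ => h2 j, Finset.sum_add_distrib, Complex.add_re,
      Complex.re_sum]
    congr 1
    rw [hS]
    refine Finset.sum_congr rfl fun j _ => ?_
    rw [Complex.mul_conj, Complex.sq_norm]
    simp
  -- bound on the off-diagonal part
  set R : ℝ := (∑ j, ∑ k ∈ Finset.univ.erase j,
      x j * (starRingEnd ℂ) (x k) * G j k).re with hR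
  have hS0 : 0 ≤ S := Finset.sum_nonneg fun j _ => sq_nonneg _
  have hA : ∑ j, a j = ∑ j ∈ s, a j := by
    symm
    refine Finset.sum_subset (Finset.subset_univ s) fun j _ hj => ?_
    simp [ha, hs0 j hj]
  have hA2 : (∑ j, a j) ^ 2 ≤ (K : ℝ) * S := by
    rw [hA]
    calc (∑ j ∈ s, a j) ^ 2 = (∑ j ∈ s, a j * 1) ^ 2 := by simp
      _ ≤ (∑ j ∈ s, a j ^ 2) * ∑ j ∈ s, (1:ℝ) ^ 2 := Finset.sum_mul_sq_le_sq_mul_sq s a 1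
      _ ≤ S * (K : ℝ) := by
          refine mul_le_mul ?_ ?_ (by positivity) hS0
          · rw [hS]
            exact Finset.sum_le_sum_of_subset_of_nonneg (Finset.subset_univ s)
              fun j _ _ => sq_nonneg _
          · simp only [one_pow, Finset.sum_const, nsmul_eq_mul, mul_one]
            exact_mod_cast hsK
      _ = (K : ℝ) * S := mul_comm _ _
  have hRbound : |R| ≤ δ * S := by
    have step1 : |R| ≤ ∑ j, ∑ k ∈ Finset.univ.erase j, μ * (a j * a k) := by
      calc |R| ≤ ‖∑ j, ∑ k ∈ Finset.univ.erase j,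
            x j * (starRingEnd ℂ) (x k) * G j k‖ := Complex.abs_re_le_norm _
        _ ≤ ∑ j, ‖∑ k ∈ Finset.univ.erase j,
            x j * (starRingEnd ℂ) (x k) * G j k‖ := (norm_sum_le _ _)
        _ ≤ ∑ j, ∑ k ∈ Finset.univ.erase j,
            ‖x j * (starRingEnd ℂ) (x k) * G j k‖ :=
              Finset.sum_le_sum fun j _ => norm_sum_le _ _
        _ ≤ ∑ j, ∑ k ∈ Finset.univ.erase j, μ * (a j * a k) := by
            refine Finset.sum_le_sum fun j _ => Finset.sum_le_sum fun k hk => ?_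
            have hjk : j ≠ k := (Finset.ne_of_mem_erase hk).symm
            rw [norm_mul, norm_mul, ha]
            simp only []
            calc ‖x j‖ * ‖(starRingEnd ℂ) (x k)‖ * ‖G j k‖
                ≤ ‖x j‖ * ‖(starRingEnd ℂ) (x k)‖ * μ := by
                  refine mul_le_mul_of_nonneg_left (hGbound j k hjk) ?_
                  positivity
              _ = μ * (‖x j‖ * ‖x k‖) := by
                  rw [Complex.norm_conj]; ring
    have step2 : ∑ j, ∑ k ∈ Finset.univ.erase j, μ * (a j * a k)
        = μ * ((∑ j, a j) ^ 2 - S) := by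
      have e : ∀ j : Fin N, ∑ k ∈ Finset.univ.erase j, μ * (a j * a k)
          = μ * (a j * ((∑ k, a k) - a j)) := by
        intro j
        rw [← Finset.mul_sum, ← Finset.mul_sum, Finset.sum_erase_eq_sub (Finset.mem_univ j)]
      rw [Finset.sum_congr rfl fun j _ => e j, ← Finset.mul_sum]
      congr 1
      have : S = ∑ j, a j ^ 2 := by
        rw [hS]
      rw [this, sq, Finset.sum_mul]
      rw [← Finset.sum_sub_distrib]
      refine Finset.sum_congr rfl fun j _ => ?_
      ring
    calc |R| ≤ μ * ((∑ j, a j) ^ 2 - S) := by rw [← step2]; exact step1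
      _ ≤ μ * ((K : ℝ) * S - S) := by
          refine mul_le_mul_of_nonneg_left ?_ hμ0
          linarith
      _ = δ * S := by rw [hδ]; ring
  rw [key]
  have h1 := (abs_le.mp hRbound).1
  have h2 := (abs_le.mp hRbound).2
  constructor <;> nlinarith [hS0]
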